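/- arXiv:1907.03216 — 4 statements merged into one kernel-verified Lean document; each statement's English description precedes it below -/
import Mathlib

section
/- Let G be a finite group, K a core-free maximal subgroup of G, and H a nilpotent normal subgroup of G. Then H is abelian and H ∩ K = {1}. -/
open Subgroup Pointwise
open scoped commutatorElement

/-- A group all of whose subgroups are trivial or everything is commutative. -/
lemma comm_of_simple_subgroups {Q : Type*} [Group Q]
    (h : ∀ S : Subgroup Q, S = ⊥ ∨ S = ⊤) (x y : Q) : x * y = y * x := by
  rcases h (Subgroup.zpowers x) with hx | hx
  · have hx1 : x = 1 := by
      have := Subgroup.mem_zpowers x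
      rw [hx, Subgroup.mem_bot] at this
      exact this
    simp [hx1]
  · have hy : y ∈ Subgroup.zpowers x := by rw [hx]; trivial
    obtain ⟨n, rfl⟩ := hy
    exact ((Commute.refl x).zpow_right n).eq

/-- Frattini-type argument: in a finite nilpotent group, the commutator subgroup
consists of non-generators. -/
lemma sup_commutator_eq_top_imp_eq_top {N : Type*} [Group N] [Finite N]
    (hnil : Group.IsNilpotent N) (M : Subgroup N)
    (h : M ⊔ commutator N = ⊤) : M = ⊤ := by
  by_contra hM
  obtain ⟨C, hC, hMC⟩ := (eq_top_or_exists_le_coatom M).resolve_left hM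
  have htfae : ∀ H : Subgroup N, IsCoatom H → H.Normal :=
    ((isNilpotent_of_finite_tfae (G := N)).out 0 2).mp hnil
  have hCnormal : C.Normal := htfae C hC
  have hQ : ∀ S : Subgroup (N ⧸ C), S = ⊥ ∨ S = ⊤ := by
    intro S
    have hsurj : Function.Surjective (QuotientGroup.mk' C) := QuotientGroup.mk'_surjective C
    have hmap : (S.comap (QuotientGroup.mk' C)).map (QuotientGroup.mk' C) = S :=
      Subgroup.map_comap_eq_self_of_surjective hsurj S
    have hle : C ≤ S.comap (QuotientGroup.mk' C) := by
      intro c hc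
      have : ((QuotientGroup.mk' C) c) = 1 := (QuotientGroup.eq_one_iff c).mpr hc
      show (QuotientGroup.mk' C) c ∈ S
      rw [this]
      exact S.one_mem
    rcases eq_or_lt_of_le hle with heq | hlt
    · left
      rw [← hmap, ← heq]
      rw [Subgroup.map_eq_bot_iff, QuotientGroup.ker_mk']
    · right
      rw [← hmap, hC.2 _ hlt]
      exact Subgroup.map_top_of_surjective _ hsurj
  have hcommle : commutator N ≤ C := by
    rw [_root_.commutator_def, Subgroup.commutator_le]
    intro g₁ _ g₂ _
    have hcomm := comm_of_simple_subgroups hQ ((QuotientGroup.mk' C) g₁) ((QuotientGroup.mk' C) g₂)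
    have h1 : (QuotientGroup.mk' C) ⁅g₁, g₂⁆ = 1 := by
      rw [map_commutatorElement]
      exact commutatorElement_eq_one_iff_mul_comm.mpr hcomm
    exact (QuotientGroup.eq_one_iff _).mp h1
  exact hC.1 (top_le_iff.mp (h ▸ sup_le hMC hcommle))

theorem stmt0 {G : Type*} [Group G] [Finite G] (K H : Subgroup G)
    (hmax : IsCoatom K) (hcf : K.normalCore = ⊥)
    (hHnormal : H.Normal) (hnil : Group.IsNilpotent ↥H) :
    (∀ a b : ↥H, a * b = b * a) ∧ H ⊓ K = ⊥ := by
  haveI := hHnormal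
  set D : Subgroup G := ⁅H, H⁆ with hD
  haveI hDnormal : D.Normal := Subgroup.commutator_normal H H
  have hDH : D ≤ H := Subgroup.commutator_le_left H H
  -- Step 1 : D ≤ K
  have hDK : D ≤ K := by
    by_contra hnot
    have hsup : D ⊔ K = ⊤ := hmax.2 _ (right_lt_sup.mpr hnot)
    -- H = D ⊔ (H ⊓ K)
    have key : H = D ⊔ (H ⊓ K) := by
      refine le_antisymm ?_ (sup_le hDH inf_le_left)
      intro x hx
      have hx' : x ∈ ((D : Set G) * (K : Set G)) := by
        rw [← Subgroup.normal_mul, hsup]; trivial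
      obtain ⟨d, hd, k, hk, rfl⟩ := hx'
      have hkH : k ∈ H := by
        have : d⁻¹ * (d * k) ∈ H := H.mul_mem (H.inv_mem (hDH hd)) hx
        simpa using this
      exact Subgroup.mul_mem _ (Subgroup.mem_sup_left hd)
        (Subgroup.mem_sup_right ⟨hkH, hk⟩)
    -- transfer to ↥H
    have hMtop : (H ⊓ K).subgroupOf H ⊔ commutator ↥H = ⊤ := by
      apply Subgroup.map_injective H.subtype_injective
      have htop : Subgroup.map H.subtype ⊤ = H := by
        rw [← MonoidHom.range_eq_map]
        exact H.range_subtype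
      rw [Subgroup.map_sup, Subgroup.subgroupOf_map_subtype, _root_.commutator_def,
        Subgroup.map_commutator, htop]
      have hinf : H ⊓ K ⊓ H = H ⊓ K := inf_eq_left.mpr inf_le_left
      rw [hinf, sup_comm]
      exact key.symm
    have hMall : (H ⊓ K).subgroupOf H = ⊤ :=
      sup_commutator_eq_top_imp_eq_top hnil _ hMtop
    have hHK : H ≤ K := by
      intro x hx
      have : (⟨x, hx⟩ : ↥H) ∈ (H ⊓ K).subgroupOf H := hMall ▸ Subgroup.mem_top _
      exact (Subgroup.mem_subgroupOf.mp this).2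
    exact hnot (hDH.trans hHK)
  -- Step 2 : D = ⊥, hence H is abelian
  have hDbot : D = ⊥ := by
    have : D ≤ K.normalCore := Subgroup.normal_le_normalCore.mpr hDK
    rwa [hcf, le_bot_iff] at this
  have habelian : ∀ a b : ↥H, a * b = b * a := by
    intro a b
    have hmem : ⁅(a : G), (b : G)⁆ ∈ D := Subgroup.commutator_mem_commutator a.2 b.2
    rw [hDbot, Subgroup.mem_bot] at hmem
    have := commutatorElement_eq_one_iff_mul_comm.mp hmem
    exact Subtype.ext (by push_cast; exact this)
  refine ⟨habelian, ?_⟩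
  -- Step 3 : H ⊓ K = ⊥
  by_cases hHleK : H ≤ K
  · have : H ≤ K.normalCore := Subgroup.normal_le_normalCore.mpr hHleK
    rw [hcf, le_bot_iff] at this
    rw [inf_of_le_left hHleK]
    exact this
  · have hsupHK : H ⊔ K = ⊤ := hmax.2 _ (right_lt_sup.mpr hHleK)
    haveI hnormal : (H ⊓ K).Normal := by
      constructor
      intro x hx g
      have hg : g ∈ ((H : Set G) * (K : Set G)) := by
        rw [← Subgroup.normal_mul, hsupHK]; trivial
      obtain ⟨h, hh, k, hk, rfl⟩ := hg
      have hk1 : k * x * k⁻¹ ∈ H ⊓ K :=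
        ⟨hHnormal.conj_mem x hx.1 k, K.mul_mem (K.mul_mem hk hx.2) (K.inv_mem hk)⟩
      have hcomm : h * (k * x * k⁻¹) = (k * x * k⁻¹) * h := by
        have := habelian ⟨h, hh⟩ ⟨k * x * k⁻¹, hk1.1⟩
        exact congrArg Subtype.val this
      have heq : h * k * x * (h * k)⁻¹ = k * x * k⁻¹ := by
        have : h * k * x * (h * k)⁻¹ = h * (k * x * k⁻¹) * h⁻¹ := by group
        rw [this, hcomm, mul_inv_cancel_right]
      rw [heq]
      exact hk1
    have : H ⊓ K ≤ K.normalCore := Subgroup.normal_le_normalCore.mpr inf_le_right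
    rwa [hcf, le_bot_iff] at this
end

section
/- Let G be a finite group, K a core-free maximal subgroup, and H a nontrivial nilpotent normal subgroup of G with H ⊄ K. Then G = Z(H)K and Z(H) ∩ K = {1}, i.e., the center Z(H) is a normal complement to K in G. -/
open scoped Pointwise

lemma center_ne_bot_of_nilpotent {G : Type*} [Group G] [Nontrivial G]
    (hnil : Group.IsNilpotent G) : Subgroup.center G ≠ ⊥ := by
  intro h
  have hucs : ∀ n, Subgroup.upperCentralSeries G n = ⊥ := by
    intro n
    induction n with
    | zero => exact upperCentralSeries_zero G
    | succ n ih =>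
      rw [← le_bot_iff, ← h]
      intro x hx
      rw [mem_upperCentralSeries_succ_iff] at hx
      rw [Subgroup.mem_center_iff]
      intro g
      have := hx g
      rw [ih, Subgroup.mem_bot] at this
      open scoped commutatorElement in have h1 : ⁅x, g⁆ = 1 := this
      exact (commutatorElement_eq_one_iff_commute.mp h1).eq.symm
  have := hucs (Group.nilpotencyClass G)
  rw [upperCentralSeries_nilpotencyClass] at this
  exact top_ne_bot this

theorem stmt1 {G : Type*} [Group G] [Finite G] (K H : Subgroup G)
    (hmax : IsCoatom K) (hcf : K.normalCore = ⊥)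
    (hHnormal : H.Normal) (hnil : Group.IsNilpotent ↥H)
    (hnt : H ≠ ⊥) (hns : ¬ H ≤ K) :
    ((Subgroup.center ↥H).map H.subtype : Set G) * (K : Set G) = Set.univ ∧
      (Subgroup.center ↥H).map H.subtype ⊓ K = ⊥ := by
  set Z : Subgroup G := (Subgroup.center ↥H).map H.subtype with hZ
  haveI hZnorm : Z.Normal := ConjAct.normal_of_characteristic_of_normal
  haveI : Nontrivial ↥H := H.nontrivial_iff_ne_bot.mpr hnt
  have hZne : Z ≠ ⊥ := by
    intro h
    rw [hZ, Subgroup.map_eq_bot_iff_of_injective _ H.subtype_injective] at h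
    exact center_ne_bot_of_nilpotent hnil h
  have hZK : ¬ Z ≤ K := by
    intro h
    exact hZne (le_bot_iff.mp (hcf ▸ Subgroup.normal_le_normalCore.mpr h))
  have hsup : K ⊔ Z = ⊤ := hmax.2 _ (left_lt_sup.mpr hZK)
  have hmul : (Z : Set G) * (K : Set G) = Set.univ := by
    rw [← Subgroup.normal_mul, sup_comm, hsup, Subgroup.coe_top]
  refine ⟨hmul, ?_⟩
  -- commuting: any element of Z commutes with any element of Z
  have hcomm : ∀ z ∈ Z, ∀ y ∈ Z, z * y * z⁻¹ = y := by
    intro z hz y hy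
    obtain ⟨z', hz', rfl⟩ := hz
    obtain ⟨y', hy', rfl⟩ := hy
    have : z' * y' * z'⁻¹ = y' := by
      rw [Subgroup.mem_center_iff.mp (SetLike.mem_coe.mp hy') z']
      group
    calc (H.subtype z') * (H.subtype y') * (H.subtype z')⁻¹
        = H.subtype (z' * y' * z'⁻¹) := by simp [map_mul]
      _ = H.subtype y' := by rw [this]
  haveI hZKnorm : (Z ⊓ K).Normal := by
    constructor
    intro x hx g
    have hg : g ∈ (Z : Set G) * (K : Set G) := by rw [hmul]; trivial
    obtain ⟨z, hz, k, hk, rfl⟩ := hg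
    have hy : k * x * k⁻¹ ∈ Z ⊓ K :=
      ⟨hZnorm.conj_mem x hx.1 k, K.mul_mem (K.mul_mem hk hx.2) (K.inv_mem hk)⟩
    have heq : z * k * x * (z * k)⁻¹ = z * (k * x * k⁻¹) * z⁻¹ := by group
    rw [heq, hcomm z hz _ hy.1]
    exact hy
  have : Z ⊓ K ≤ K.normalCore := Subgroup.normal_le_normalCore.mpr inf_le_right
  rw [hcf, le_bot_iff] at this
  exact this
end

section
/- Let G be a finite group acting faithfully and primitively on a set M with |M| > 1, and let H be a nilpotent normal subgroup of G. If some element h ∈ H fixes a point of M, then h = 1. -/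
/-- A primitive action: transitive and every block is trivial. -/
def IsPrimitiveAction (G M : Type*) [Group G] [MulAction G M] : Prop :=
  MulAction.IsPretransitive G M ∧
    ∀ B : Set M, MulAction.IsBlock G B → MulAction.IsTrivialBlock B

/-- A normal subgroup contained in a point stabilizer of a transitive action acts trivially. -/
lemma normal_le_stabilizer_smul_eq {G M : Type*} [Group G] [MulAction G M]
    [MulAction.IsPretransitive G M] {N : Subgroup G} (hN : N.Normal) {m : M}
    (hle : N ≤ MulAction.stabilizer G m) {n : G} (hn : n ∈ N) (x : M) : n • x = x := by
  obtain ⟨g, rfl⟩ := MulAction.exists_smul_eq G m x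
  have h1 : g⁻¹ * n * g ∈ N := hN.conj_mem' n hn g
  have h2 : (g⁻¹ * n * g) • m = m := hle h1
  calc n • g • m = g • (g⁻¹ * n * g) • m := by
        rw [smul_smul, smul_smul]
        congr 1
        group
    _ = g • m := by rw [h2]

theorem stmt7 {G M : Type*} [Group G] [Finite G] [MulAction G M] [Nontrivial M]
    [FaithfulSMul G M] (hprim : IsPrimitiveAction G M)
    (H : Subgroup G) (hHnormal : H.Normal) (hnil : Group.IsNilpotent ↥H)
    (h : G) (hh : h ∈ H) (m : M) (hfix : h • m = m) : h = 1 := by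
  obtain ⟨htrans, hblocks⟩ := hprim
  set K : Subgroup G := MulAction.stabilizer G m with hK
  -- K is a coatom
  have hKcoatom : IsCoatom K := by
    constructor
    · intro htop
      obtain ⟨a, b, hab⟩ := exists_pair_ne M
      apply hab
      obtain ⟨g, hg⟩ := MulAction.exists_smul_eq G m a
      obtain ⟨g', hg'⟩ := MulAction.exists_smul_eq G m b
      have hgm : g • m = m := by
        have : g ∈ K := htop ▸ Subgroup.mem_top g
        exact this
      have hg'm : g' • m = m := by
        have : g' ∈ K := htop ▸ Subgroup.mem_top g'
        exact this
      rw [← hg, ← hg', hgm, hg'm]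
    · intro L hKL
      have hle : K ≤ L := le_of_lt hKL
      have hblock := MulAction.IsBlock.of_orbit (H := L) (a := m) hle
      rcases hblocks _ hblock with hsub | huniv
      · exfalso
        obtain ⟨x, hxL, hxK⟩ := SetLike.exists_of_lt hKL
        have hx : x • m ∈ MulAction.orbit L m := ⟨⟨x, hxL⟩, rfl⟩
        have hm : m ∈ MulAction.orbit L m := MulAction.mem_orbit_self m
        have := hsub hx hm
        exact hxK this
      · have := MulAction.stabilizer_orbit_eq hle
        rw [huniv] at this
        rw [← this]
        ext g
        simp [MulAction.mem_stabilizer_iff]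
  -- N = H ⊓ K
  set N : Subgroup G := H ⊓ K with hN
  have hhN : h ∈ N := ⟨hh, hfix⟩
  -- suffices: N is normal in G
  suffices hNnorm : N.Normal by
    have hNle : N ≤ K := inf_le_right
    have : ∀ x : M, h • x = x := fun x =>
      normal_le_stabilizer_smul_eq hNnorm hNle hhN x
    have : ∀ x : M, h • x = (1 : G) • x := by simpa using this
    exact eq_of_smul_eq_smul this
  -- Case split: N = H or N < H
  by_cases hNH : N = H
  · -- H ≤ K, so H is normal in G and contained in K; but N = H
    rw [hNH]; exact hHnormal
  -- N < H; use normalizer condition in H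
  have hNleH : N ≤ H := inf_le_left
  have hnc : NormalizerCondition ↥H := normalizerCondition_of_isNilpotent (G := ↥H)
  have hNsub : N.subgroupOf H < ⊤ := by
    rw [lt_top_iff_ne_top]
    intro htop
    apply hNH
    apply le_antisymm hNleH
    intro x hx
    have : (⟨x, hx⟩ : H) ∈ N.subgroupOf H := htop ▸ Subgroup.mem_top _
    exact this
  have hlt := hnc _ hNsub
  obtain ⟨x, hxnorm, hxN⟩ := SetLike.exists_of_lt hlt
  -- x : ↥H, x normalizes N.subgroupOf H, x ∉ N
  have hxG : (x : G) ∈ H := x.2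
  have hxnotN : (x : G) ∉ N := by
    intro hmem
    exact hxN (by simpa [Subgroup.mem_subgroupOf] using hmem)
  -- x normalizes N in G
  have hxnormG : (x : G) ∈ Subgroup.normalizer (N : Set G) := by
    rw [Subgroup.mem_normalizer_iff]
    intro g
    constructor
    · intro hg
      have hgH : g ∈ H := hNleH hg
      have : (⟨g, hgH⟩ : H) ∈ N.subgroupOf H := by simpa [Subgroup.mem_subgroupOf] using hg
      have := (Subgroup.mem_normalizer_iff.mp hxnorm ⟨g, hgH⟩).mp this
      simpa [Subgroup.mem_subgroupOf] using this
    · intro hg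
      have hgH : g ∈ H := by
        have : (x : G) * g * (x : G)⁻¹ ∈ H := hNleH hg
        have := H.mul_mem (H.mul_mem (H.inv_mem hxG) this) hxG
        simpa [mul_assoc] using this
      have hmem : (⟨(x : G), hxG⟩ : H) * ⟨g, hgH⟩ * (⟨(x : G), hxG⟩ : H)⁻¹ ∈ N.subgroupOf H := by
        simpa [Subgroup.mem_subgroupOf] using hg
      have := (Subgroup.mem_normalizer_iff.mp hxnorm ⟨g, hgH⟩).mpr hmem
      simpa [Subgroup.mem_subgroupOf] using this
  -- K normalizes N
  have hKnorm : K ≤ Subgroup.normalizer (N : Set G) := by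
    intro k hk
    rw [Subgroup.mem_normalizer_iff]
    intro g
    constructor
    · rintro ⟨hgH, hgK⟩
      exact ⟨hHnormal.conj_mem g hgH k, K.mul_mem (K.mul_mem hk hgK) (K.inv_mem hk)⟩
    · rintro ⟨hgH, hgK⟩
      have h1 : g = k⁻¹ * (k * g * k⁻¹) * k := by group
      constructor
      · rw [h1]; exact hHnormal.conj_mem' _ hgH k
      · rw [h1]; exact K.mul_mem (K.mul_mem (K.inv_mem hk) hgK) hk
  -- K < normalizer, so normalizer = ⊤
  have hKlt : K < Subgroup.normalizer (N : Set G) := by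
    apply lt_of_le_of_ne hKnorm
    intro heq
    apply hxnotN
    refine ⟨hxG, ?_⟩
    have : (x : G) ∈ K := heq ▸ hxnormG
    exact this
  have : Subgroup.normalizer (N : Set G) = ⊤ := hKcoatom.2 _ hKlt
  exact Subgroup.normalizer_eq_top_iff.mp this
end

section
/- Let G be a finite group, H a nilpotent normal subgroup, and K a core-free maximal subgroup of G. Then every element of H ∩ K equals the identity; in particular, if h ∈ H stabilizes the coset K in the action of G on G/K, then h = 1. -/
theorem stmt17 {G : Type*} [Group G] [Finite G] (H K : Subgroup G)
    (hnil : Group.IsNilpotent ↥H) (hHnormal : H.Normal)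
    (hmax : IsCoatom K) (hcf : K.normalCore = ⊥) :
    (∀ h ∈ H ⊓ K, h = 1) ∧
      (∀ h ∈ H, h • (QuotientGroup.mk (1 : G) : G ⧸ K) = QuotientGroup.mk 1 → h = 1) := by
  have key : ∀ h ∈ H ⊓ K, h = 1 := by
    by_cases hHK : H ≤ K
    · intro h hh
      have : h ∈ K.normalCore := Subgroup.normal_le_normalCore.mpr hHK hh.1
      rwa [hcf, Subgroup.mem_bot] at this
    · -- normalizer condition in the nilpotent group H
      have hnc : NormalizerCondition ↥H := normalizerCondition_of_isNilpotent
      set D := (H ⊓ K).subgroupOf H with hD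
      have hDtop : D < ⊤ := by
        rcases lt_or_eq_of_le (le_top : D ≤ ⊤) with h | h
        · exact h
        · exfalso
          apply hHK
          intro x hx
          have : (⟨x, hx⟩ : ↥H) ∈ D := h ▸ Subgroup.mem_top _
          exact ((Subgroup.mem_subgroupOf.mp this).2)
      obtain ⟨x, hxN, hxD⟩ := SetLike.exists_of_lt (hnc D hDtop)
      -- x.val normalizes H ⊓ K in G
      have hxnorm : (x : G) ∈ Subgroup.normalizer ((H ⊓ K : Subgroup G) : Set G) := by
        rw [Subgroup.mem_normalizer_iff]
        intro g
        constructor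
        · rintro ⟨hgH, hgK⟩
          have hg' : (⟨g, hgH⟩ : ↥H) ∈ D := Subgroup.mem_subgroupOf.mpr ⟨hgH, hgK⟩
          have := (Subgroup.mem_normalizer_iff.mp hxN ⟨g, hgH⟩).mp hg'
          have h2 := Subgroup.mem_subgroupOf.mp this
          exact ⟨h2.1, h2.2⟩
        · intro hg
          have hgH : g ∈ H := by
            have : (x : G) * g * (x : G)⁻¹ ∈ H := hg.1
            have := hHnormal.conj_mem _ this ((x : G)⁻¹)
            simpa [mul_assoc] using this
          have hg' : ((⟨x, x.2⟩ : ↥H) * ⟨g, hgH⟩ * (⟨x, x.2⟩)⁻¹ : ↥H) ∈ D := by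
            apply Subgroup.mem_subgroupOf.mpr
            exact ⟨hg.1, hg.2⟩
          have := (Subgroup.mem_normalizer_iff.mp hxN ⟨g, hgH⟩).mpr hg'
          exact Subgroup.mem_subgroupOf.mp this
      -- K ≤ normalizer, and x ∉ K, so normalizer = ⊤ by maximality
      have hKle : K ≤ Subgroup.normalizer ((H ⊓ K : Subgroup G) : Set G) := by
        intro k hk
        rw [Subgroup.mem_normalizer_iff]
        intro g
        constructor
        · rintro ⟨hgH, hgK⟩
          exact ⟨hHnormal.conj_mem _ hgH _, K.mul_mem (K.mul_mem hk hgK) (K.inv_mem hk)⟩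
        · rintro ⟨hgH, hgK⟩
          constructor
          · have := hHnormal.conj_mem _ hgH (k⁻¹)
            simpa [mul_assoc] using this
          · have := K.mul_mem (K.mul_mem (K.inv_mem hk) hgK) hk
            simpa [mul_assoc] using this
      have hxK : (x : G) ∉ K := by
        intro hxk
        exact hxD (Subgroup.mem_subgroupOf.mpr ⟨x.2, hxk⟩)
      have hlt : K < Subgroup.normalizer ((H ⊓ K : Subgroup G) : Set G) := lt_of_le_of_ne hKle (by
        intro h
        exact hxK (h ▸ hxnorm))
      have htop : Subgroup.normalizer ((H ⊓ K : Subgroup G) : Set G) = ⊤ := hmax.2 _ hlt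
      haveI : (H ⊓ K).Normal := Subgroup.normalizer_eq_top_iff.mp htop
      intro h hh
      have : h ∈ K.normalCore := Subgroup.normal_le_normalCore.mpr inf_le_right hh
      rwa [hcf, Subgroup.mem_bot] at this
  refine ⟨key, ?_⟩
  intro h hH hsm
  have : (QuotientGroup.mk (h * 1) : G ⧸ K) = QuotientGroup.mk 1 := by
    simpa [QuotientGroup.mk_mul] using hsm
  rw [QuotientGroup.eq] at this
  have hK : h ∈ K := by simpa using K.inv_mem this
  exact key h ⟨hH, hK⟩
end
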